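/- (Sensitivities of reactive power injections to admittance parameters.) Fix a node k ∈ Fin n. For a branch e = (i, j) ∈ ℰ, the partial derivative of the reactive power injection q_k(g, b) with respect to the branch conductance g_e (all other parameters held fixed) equals −v_i v_j sin(δ_i − δ_j) if k = i, equals v_i v_j sin(δ_i − δ_j) if k = j, and equals 0 if k ∉ {i, j}; the partial derivative of q_k with respect to the branch susceptance b_e equals −(v_i² − v_i v_j cos(δ_i − δ_j)) if k = i, equals −(v_j² − v_i v_j cos(δ_i − δ_j)) if k = j, and equals 0 if k ∉ {i, j}. For a shunt element at node l, the partial derivative of q_k with respect to the shunt susceptance b_l equals −v_k² if k = l and 0 otherwise, and the partial derivative of q_k with respect to the shunt conductance g_l equals 0. -/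

import Mathlib

open Matrix

/-- The branches of the complete graph on `n` nodes: ordered pairs `(i, j)` with `i < j`. -/
abbrev Branch (n : ℕ) := {p : Fin n × Fin n // p.1 < p.2}

/-- The complete-graph incidence matrix with self-loops `𝒜ₙ`. -/
def completeIncidence (n : ℕ) : Matrix (Branch n ⊕ Fin n) (Fin n) ℂ :=
  Matrix.of fun r c =>
    match r with
    | Sum.inl e => if c = e.val.1 then 1 else if c = e.val.2 then -1 else 0
    | Sum.inr k => if c = k then 1 else 0

/-- `F(x) = diag (conj x) ⬝ 𝒜ₙᵀ ⬝ diag (𝒜ₙ *ᵥ x)`. -/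
noncomputable def Fmat (n : ℕ) (x : Fin n → ℂ) : Matrix (Fin n) (Branch n ⊕ Fin n) ℂ :=
  Matrix.diagonal (fun i => (starRingEnd ℂ) (x i)) * (completeIncidence n)ᵀ *
    Matrix.diagonal (completeIncidence n *ᵥ x)

/-- The reactive bus power injection `q_k (g, b) = -Im ((F(x) *ᵥ (g + j b))_k)` where
`x_i = v_i exp (j δ_i)`. -/
noncomputable def reactiveInjection (n : ℕ) (v δ : Fin n → ℝ) (g b : Branch n ⊕ Fin n → ℝ)
    (k : Fin n) : ℝ :=
  -((Fmat n (fun i => (v i : ℂ) * Complex.exp (Complex.I * (δ i : ℂ))) *ᵥ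
      (fun e => (g e : ℂ) + Complex.I * (b e : ℂ))) k).im


section AuxSensitivity

variable {n : ℕ}

lemma aux_deriv (c a d : ℂ) (t₀ : ℝ) :
    HasDerivAt (fun t : ℝ => -(c * (a + d * (t : ℂ))).im) (-(c * d).im) t₀ := by
  have h : (fun t : ℝ => -(c * (a + d * (t : ℂ))).im)
      = fun t : ℝ => -((c * d).im * t + (c * a).im) := by
    funext t
    have : c * (a + d * (t : ℂ)) = c * a + (c * d) * (t : ℂ) := by ring
    rw [this]
    simp [Complex.add_im, Complex.mul_im, Complex.ofReal_re, Complex.ofReal_im]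
    ring
  rw [h]
  have h2 := (((hasDerivAt_id t₀).const_mul ((c*d).im)).add_const ((c*a).im)).neg
  rw [mul_one] at h2
  exact h2.congr_of_eventuallyEq (Filter.Eventually.of_forall fun t => by simp)

lemma key_g (n : ℕ) (v δ : Fin n → ℝ) (g b : Branch n ⊕ Fin n → ℝ) (k : Fin n)
    (m : Branch n ⊕ Fin n) :
    HasDerivAt (fun t : ℝ => reactiveInjection n v δ (Function.update g m t) b k)
      (-(Fmat n (fun i => (v i : ℂ) * Complex.exp (Complex.I * (δ i : ℂ))) k m).im) (g m) := by
  set F := Fmat n (fun i => (v i : ℂ) * Complex.exp (Complex.I * (δ i : ℂ))) with hF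
  have hfun : (fun t : ℝ => reactiveInjection n v δ (Function.update g m t) b k)
      = fun t : ℝ => ∑ e, -(F k e *
          ((if e = m then (Complex.I * b m) else ((g e : ℂ) + Complex.I * b e))
            + (if e = m then (1:ℂ) else 0) * (t : ℂ))).im := by
    funext t
    unfold reactiveInjection
    rw [mulVec, dotProduct, ← hF, Complex.im_sum, ← Finset.sum_neg_distrib]
    refine Finset.sum_congr rfl fun e _ => ?_
    congr 1
    by_cases he : e = m
    · subst he; simp [Function.update_self]
    · simp [Function.update_of_ne he, he]
  rw [hfun]
  have hsum := HasDerivAt.sum (u := Finset.univ)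
    (A := fun e (t : ℝ) => -(F k e *
          ((if e = m then (Complex.I * b m) else ((g e : ℂ) + Complex.I * b e))
            + (if e = m then (1:ℂ) else 0) * (t : ℂ))).im)
    (A' := fun e => -(F k e * (if e = m then (1:ℂ) else 0)).im) (x := g m)
    (fun e _ => aux_deriv _ _ _ _)
  have : ∑ e, -(F k e * (if e = m then (1:ℂ) else 0)).im = -(F k m).im := by
    rw [Fintype.sum_eq_single m]
    · simp
    · intro e he; simp [he]
  rw [this] at hsum
  exact hsum.congr_of_eventuallyEq (Filter.Eventually.of_forall fun t => by rw [Finset.sum_apply])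

lemma key_b (n : ℕ) (v δ : Fin n → ℝ) (g b : Branch n ⊕ Fin n → ℝ) (k : Fin n)
    (m : Branch n ⊕ Fin n) :
    HasDerivAt (fun t : ℝ => reactiveInjection n v δ g (Function.update b m t) k)
      (-(Fmat n (fun i => (v i : ℂ) * Complex.exp (Complex.I * (δ i : ℂ))) k m).re) (b m) := by
  set F := Fmat n (fun i => (v i : ℂ) * Complex.exp (Complex.I * (δ i : ℂ))) with hF
  have hfun : (fun t : ℝ => reactiveInjection n v δ g (Function.update b m t) k)
      = fun t : ℝ => ∑ e, -(F k e *
          ((if e = m then (g m : ℂ) else ((g e : ℂ) + Complex.I * b e))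
            + (if e = m then Complex.I else 0) * (t : ℂ))).im := by
    funext t
    unfold reactiveInjection
    rw [mulVec, dotProduct, ← hF, Complex.im_sum, ← Finset.sum_neg_distrib]
    refine Finset.sum_congr rfl fun e _ => ?_
    congr 1
    by_cases he : e = m
    · subst he; simp [Function.update_self]
    · simp [Function.update_of_ne he, he]
  rw [hfun]
  have hsum := HasDerivAt.sum (u := Finset.univ)
    (A := fun e (t : ℝ) => -(F k e *
          ((if e = m then (g m : ℂ) else ((g e : ℂ) + Complex.I * b e))
            + (if e = m then Complex.I else 0) * (t : ℂ))).im)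
    (A' := fun e => -(F k e * (if e = m then Complex.I else 0)).im) (x := b m)
    (fun e _ => aux_deriv _ _ _ _)
  have : ∑ e, -(F k e * (if e = m then Complex.I else 0)).im = -(F k m).re := by
    rw [Fintype.sum_eq_single m]
    · simp [Complex.mul_im]
    · intro e he; simp [he]
  rw [this] at hsum
  exact hsum.congr_of_eventuallyEq (Filter.Eventually.of_forall fun t => by rw [Finset.sum_apply])

lemma mv_inl (n : ℕ) (x : Fin n → ℂ) (e : Branch n) :
    (completeIncidence n *ᵥ x) (Sum.inl e) = x e.val.1 - x e.val.2 := by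
  have hne : e.val.1 ≠ e.val.2 := ne_of_lt e.prop
  rw [mulVec, dotProduct]
  have h : ∀ c, completeIncidence n (Sum.inl e) c * x c
      = (if c = e.val.1 then x c else 0) + (if c = e.val.2 then -x c else 0) := by
    intro c
    by_cases h1 : c = e.val.1
    · subst h1; simp [completeIncidence, hne]
    · by_cases h2 : c = e.val.2
      · subst h2; simp [completeIncidence, h1, Ne.symm hne]
      · simp [completeIncidence, h1, h2]
  simp [h, Finset.sum_add_distrib, Finset.sum_ite_eq', sub_eq_add_neg]

lemma mv_inr (n : ℕ) (x : Fin n → ℂ) (l : Fin n) :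
    (completeIncidence n *ᵥ x) (Sum.inr l) = x l := by
  simp [mulVec, dotProduct, completeIncidence, ite_mul, Finset.sum_ite_eq']

lemma Fmat_inl (n : ℕ) (x : Fin n → ℂ) (k : Fin n) (e : Branch n) :
    Fmat n x k (Sum.inl e) = (starRingEnd ℂ) (x k) *
      (if k = e.val.1 then 1 else if k = e.val.2 then -1 else 0) *
      (x e.val.1 - x e.val.2) := by
  rw [Fmat, Matrix.mul_diagonal, Matrix.diagonal_mul, mv_inl]
  simp [completeIncidence, Matrix.transpose_apply]

lemma Fmat_inr (n : ℕ) (x : Fin n → ℂ) (k : Fin n) (l : Fin n) :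
    Fmat n x k (Sum.inr l) = (starRingEnd ℂ) (x k) * (if k = l then 1 else 0) * x l := by
  rw [Fmat, Matrix.mul_diagonal, Matrix.diagonal_mul, mv_inr]
  simp [completeIncidence, Matrix.transpose_apply]

lemma im1 (a b α β : ℝ) :
    ((starRingEnd ℂ) ((a:ℂ) * Complex.exp (Complex.I * α)) *
      ((a:ℂ) * Complex.exp (Complex.I * α) - (b:ℂ) * Complex.exp (Complex.I * β))).im
      = a * b * Real.sin (α - β) := by
  simp only [mul_comm Complex.I]
  rw [Complex.exp_mul_I, Complex.exp_mul_I]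
  simp [_root_.map_mul, _root_.map_add, Complex.conj_ofReal, Complex.conj_I, ← Complex.ofReal_cos,
    ← Complex.ofReal_sin, Complex.mul_im, Complex.mul_re, Complex.add_im, Complex.add_re,
    Complex.sub_im, Complex.sub_re, Complex.I_re, Complex.I_im, Complex.ofReal_re,
    Complex.ofReal_im, Real.sin_sub, Real.cos_sub]
  ring

lemma re1 (a b α β : ℝ) :
    ((starRingEnd ℂ) ((a:ℂ) * Complex.exp (Complex.I * α)) *
      ((a:ℂ) * Complex.exp (Complex.I * α) - (b:ℂ) * Complex.exp (Complex.I * β))).re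
      = a ^ 2 - a * b * Real.cos (α - β) := by
  simp only [mul_comm Complex.I]
  rw [Complex.exp_mul_I, Complex.exp_mul_I]
  simp [_root_.map_mul, _root_.map_add, Complex.conj_ofReal, Complex.conj_I, ← Complex.ofReal_cos,
    ← Complex.ofReal_sin, Complex.mul_im, Complex.mul_re, Complex.add_im, Complex.add_re,
    Complex.sub_im, Complex.sub_re, Complex.I_re, Complex.I_im, Complex.ofReal_re,
    Complex.ofReal_im, Real.sin_sub, Real.cos_sub]
  nlinarith [Real.sin_sq_add_cos_sq α]

lemma im2 (a α : ℝ) :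
    ((starRingEnd ℂ) ((a:ℂ) * Complex.exp (Complex.I * α)) *
      ((a:ℂ) * Complex.exp (Complex.I * α))).im = 0 := by
  simp only [mul_comm Complex.I]
  rw [Complex.exp_mul_I]
  simp [_root_.map_mul, _root_.map_add, Complex.conj_ofReal, Complex.conj_I, ← Complex.ofReal_cos,
    ← Complex.ofReal_sin, Complex.mul_im, Complex.mul_re, Complex.add_im, Complex.add_re,
    Complex.I_re, Complex.I_im, Complex.ofReal_re, Complex.ofReal_im]
  ring

lemma re2 (a α : ℝ) :
    ((starRingEnd ℂ) ((a:ℂ) * Complex.exp (Complex.I * α)) *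
      ((a:ℂ) * Complex.exp (Complex.I * α))).re = a ^ 2 := by
  simp only [mul_comm Complex.I]
  rw [Complex.exp_mul_I]
  simp [_root_.map_mul, _root_.map_add, Complex.conj_ofReal, Complex.conj_I, ← Complex.ofReal_cos,
    ← Complex.ofReal_sin, Complex.mul_im, Complex.mul_re, Complex.add_im, Complex.add_re,
    Complex.I_re, Complex.I_im, Complex.ofReal_re, Complex.ofReal_im]
  nlinarith [Real.sin_sq_add_cos_sq α]

end AuxSensitivity

/-- **Sensitivities of reactive power injections to admittance parameters.**
For a branch `e = (i, j)`, `∂q_k/∂g_e = -v_i v_j sin (δ_i - δ_j)` if `k = i`,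
`v_i v_j sin (δ_i - δ_j)` if `k = j`, and `0` otherwise, while
`∂q_k/∂b_e = -(v_i² - v_i v_j cos (δ_i - δ_j))` if `k = i`,
`-(v_j² - v_i v_j cos (δ_i - δ_j))` if `k = j`, and `0` otherwise. For a shunt at node `l`,
`∂q_k/∂b_l = -v_k²` if `k = l` and `0` otherwise, and `∂q_k/∂g_l = 0`. -/
theorem reactive_injection_admittance_sensitivities (n : ℕ) (v δ : Fin n → ℝ)
    (g b : Branch n ⊕ Fin n → ℝ) (k : Fin n) :
    (∀ e : Branch n,
      HasDerivAt (fun t : ℝ => reactiveInjection n v δ (Function.update g (Sum.inl e) t) b k)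
        (if k = e.val.1 then
          -(v e.val.1 * v e.val.2 * Real.sin (δ e.val.1 - δ e.val.2))
        else if k = e.val.2 then
          v e.val.1 * v e.val.2 * Real.sin (δ e.val.1 - δ e.val.2)
        else 0)
        (g (Sum.inl e)) ∧
      HasDerivAt (fun t : ℝ => reactiveInjection n v δ g (Function.update b (Sum.inl e) t) k)
        (if k = e.val.1 then
          -(v e.val.1 ^ 2 - v e.val.1 * v e.val.2 * Real.cos (δ e.val.1 - δ e.val.2))
        else if k = e.val.2 then
          -(v e.val.2 ^ 2 - v e.val.1 * v e.val.2 * Real.cos (δ e.val.1 - δ e.val.2))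
        else 0)
        (b (Sum.inl e))) ∧
    (∀ l : Fin n,
      HasDerivAt (fun t : ℝ => reactiveInjection n v δ g (Function.update b (Sum.inr l) t) k)
        (if k = l then -(v k ^ 2) else 0) (b (Sum.inr l)) ∧
      HasDerivAt (fun t : ℝ => reactiveInjection n v δ (Function.update g (Sum.inr l) t) b k)
        0 (g (Sum.inr l))) := by
  set x : Fin n → ℂ := fun i => (v i : ℂ) * Complex.exp (Complex.I * (δ i : ℂ)) with hx
  refine ⟨fun e => ⟨?_, ?_⟩, fun l => ⟨?_, ?_⟩⟩
  · -- g, branch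
    have hval : (if k = e.val.1 then
          -(v e.val.1 * v e.val.2 * Real.sin (δ e.val.1 - δ e.val.2))
        else if k = e.val.2 then
          v e.val.1 * v e.val.2 * Real.sin (δ e.val.1 - δ e.val.2)
        else 0) = -(Fmat n x k (Sum.inl e)).im := by
      rw [Fmat_inl]
      by_cases h1 : k = e.val.1
      · subst h1
        simp only [eq_self_iff_true, if_true, mul_one, hx]
        rw [im1]
      · by_cases h2 : k = e.val.2
        · subst h2
          simp only [if_neg h1, eq_self_iff_true, if_true, hx]
          have heq : (starRingEnd ℂ) ((v e.val.2 : ℂ) * Complex.exp (Complex.I * (δ e.val.2 : ℂ)))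
              * (-1) * ((v e.val.1 : ℂ) * Complex.exp (Complex.I * (δ e.val.1 : ℂ))
                - (v e.val.2 : ℂ) * Complex.exp (Complex.I * (δ e.val.2 : ℂ)))
              = (starRingEnd ℂ) ((v e.val.2 : ℂ) * Complex.exp (Complex.I * (δ e.val.2 : ℂ)))
              * ((v e.val.2 : ℂ) * Complex.exp (Complex.I * (δ e.val.2 : ℂ))
                - (v e.val.1 : ℂ) * Complex.exp (Complex.I * (δ e.val.1 : ℂ))) := by ring
          rw [heq, im1, show δ e.val.2 - δ e.val.1 = -(δ e.val.1 - δ e.val.2) by ring,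
            Real.sin_neg]
          ring
        · simp [h1, h2]
    rw [hval, hx]
    exact key_g n v δ g b k (Sum.inl e)
  · -- b, branch
    have hval : (if k = e.val.1 then
          -(v e.val.1 ^ 2 - v e.val.1 * v e.val.2 * Real.cos (δ e.val.1 - δ e.val.2))
        else if k = e.val.2 then
          -(v e.val.2 ^ 2 - v e.val.1 * v e.val.2 * Real.cos (δ e.val.1 - δ e.val.2))
        else 0) = -(Fmat n x k (Sum.inl e)).re := by
      rw [Fmat_inl]
      by_cases h1 : k = e.val.1
      · subst h1
        simp only [eq_self_iff_true, if_true, mul_one, hx]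
        rw [re1]
      · by_cases h2 : k = e.val.2
        · subst h2
          simp only [if_neg h1, eq_self_iff_true, if_true, hx]
          have heq : (starRingEnd ℂ) ((v e.val.2 : ℂ) * Complex.exp (Complex.I * (δ e.val.2 : ℂ)))
              * (-1) * ((v e.val.1 : ℂ) * Complex.exp (Complex.I * (δ e.val.1 : ℂ))
                - (v e.val.2 : ℂ) * Complex.exp (Complex.I * (δ e.val.2 : ℂ)))
              = (starRingEnd ℂ) ((v e.val.2 : ℂ) * Complex.exp (Complex.I * (δ e.val.2 : ℂ)))
              * ((v e.val.2 : ℂ) * Complex.exp (Complex.I * (δ e.val.2 : ℂ))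
                - (v e.val.1 : ℂ) * Complex.exp (Complex.I * (δ e.val.1 : ℂ))) := by ring
          rw [heq, re1, show δ e.val.2 - δ e.val.1 = -(δ e.val.1 - δ e.val.2) by ring,
            Real.cos_neg]
          ring
        · simp [h1, h2]
    rw [hval, hx]
    exact key_b n v δ g b k (Sum.inl e)
  · -- b, shunt
    have hval : (if k = l then -(v k ^ 2) else 0) = -(Fmat n x k (Sum.inr l)).re := by
      rw [Fmat_inr]
      by_cases h : k = l
      · subst h
        simp only [eq_self_iff_true, if_true, mul_one, hx]
        rw [re2]
      · simp [h]
    rw [hval, hx]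
    exact key_b n v δ g b k (Sum.inr l)
  · -- g, shunt
    have hval : (0 : ℝ) = -(Fmat n x k (Sum.inr l)).im := by
      rw [Fmat_inr]
      by_cases h : k = l
      · subst h
        simp only [eq_self_iff_true, if_true, mul_one, hx]
        rw [im2]
        simp
      · simp [h]
    rw [hval, hx]
    exact key_g n v δ g b k (Sum.inr l)
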